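/- Let J ∈ ℝ^{k×k} symmetric with J² = I, Θ ∈ ℝ^{k×k} skew-symmetric, Γ ∈ ℝ^{k×k} symmetric, and let Λ be the 2k×2k block matrix with blocks [[JΘ, JΓ],[I_k, JΘ]], and S the 2k×2k block matrix [[0, J],[−J, 0]]. Then exp(tΛ)ᵀ · S · exp(tΛ) = S for all t ∈ ℝ. -/

import Mathlib

open Matrix

noncomputable section

/-- For `Θ` skew-symmetric and `Γ` symmetric, the block matrix
`Λ = [JΘ, JΓ; I_k, JΘ]` satisfies `exp(tΛ)ᵀ S exp(tΛ) = S` for all `t`, where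
`S = [0, J; −J, 0]`. -/
theorem stmt_15 {k : ℕ} (J : Matrix (Fin k) (Fin k) ℝ) (hJ : Jᵀ = J) (hJ2 : J * J = 1)
    (Θ Γ : Matrix (Fin k) (Fin k) ℝ) (hΘ : Θᵀ = -Θ) (hΓ : Γᵀ = Γ)
    (Λ S : Matrix (Fin k ⊕ Fin k) (Fin k ⊕ Fin k) ℝ)
    (hΛ : Λ = fromBlocks (J * Θ) (J * Γ) 1 (J * Θ))
    (hS : S = fromBlocks 0 J (-J) 0) :
    ∀ t : ℝ, (NormedSpace.exp (t • Λ))ᵀ * S * NormedSpace.exp (t • Λ) = S := by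
  intro t
  have hSS : S * S = -1 := by
    subst hS
    simp [Matrix.fromBlocks_multiply, hJ2, ← Matrix.fromBlocks_one,
      Matrix.fromBlocks_neg]
  have hnSS : (-S) * S = 1 := by rw [neg_mul, hSS, neg_neg]
  have hSinv : S⁻¹ = -S := Matrix.inv_eq_left_inv hnSS
  have hSunit : IsUnit S :=
    (Matrix.isUnit_iff_isUnit_det S).mpr (Matrix.isUnit_det_of_left_inverse hnSS)
  have hkey : Λᵀ = S * Λ * S := by
    subst hΛ hS
    rw [Matrix.fromBlocks_transpose, Matrix.fromBlocks_multiply,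
      Matrix.fromBlocks_multiply]
    simp [Matrix.transpose_mul, hΘ, hJ, hΓ, ← Matrix.mul_assoc, hJ2]
  have hconj : (t • Λ)ᵀ = S * (-(t • Λ)) * S⁻¹ := by
    rw [hSinv, Matrix.transpose_smul, hkey]
    simp [Matrix.mul_smul, Matrix.smul_mul]
  have hexpT : (NormedSpace.exp (t • Λ))ᵀ
      = S * NormedSpace.exp (-(t • Λ)) * S⁻¹ := by
    rw [← Matrix.exp_transpose, hconj, Matrix.exp_conj S _ hSunit]
  have hmul : NormedSpace.exp (-(t • Λ)) * NormedSpace.exp (t • Λ) = 1 := by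
    rw [← Matrix.exp_add_of_commute (-(t • Λ)) (t • Λ) (Commute.neg_left rfl)]
    simp
  rw [hexpT, hSinv, Matrix.mul_assoc (S * NormedSpace.exp (-(t • Λ))) (-S) S,
    hnSS, Matrix.mul_one, Matrix.mul_assoc, hmul, Matrix.mul_one]

end
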